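/- There exist a bump function α : ℝ → ℝ and constants c, d > 0 such that ‖α‖_n ≤ c·n^{dn} for every integer n ≥ 1. -/

import Mathlib

open Real Set Polynomial Finset

noncomputable section BumpAux
namespace BumpAux

/-- The polynomials appearing in the iterated derivatives of `expNegInvGlue`. -/
def PP : ℕ → ℝ[X]
  | 0 => 1
  | k + 1 => X ^ 2 * (PP k - derivative (PP k))

lemma iteratedDeriv_expNegInvGlue :
    ∀ k, iteratedDeriv k expNegInvGlue = fun x => (PP k).eval x⁻¹ * expNegInvGlue x
  | 0 => by funext x; simp [PP]
  | k + 1 => by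
    rw [iteratedDeriv_succ, iteratedDeriv_expNegInvGlue k]
    funext x
    rw [(expNegInvGlue.hasDerivAt_polynomial_eval_inv_mul (PP k) x).deriv]
    simp [PP]

lemma natDegree_PP : ∀ k, (PP k).natDegree ≤ 2 * k
  | 0 => by simp [PP]
  | k + 1 => by
    refine (natDegree_mul_le).trans ?_
    have h1 : (X ^ 2 : ℝ[X]).natDegree ≤ 2 := by simp
    have h2 : (PP k - derivative (PP k)).natDegree ≤ 2 * k :=
      (natDegree_sub_le _ _).trans
        (max_le (natDegree_PP k)
          ((natDegree_derivative_le _).trans ((Nat.sub_le _ 1).trans (natDegree_PP k))))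
    omega

/-- weighted ℓ¹ norm of coefficients. -/
def NN (k : ℕ) (p : ℝ[X]) : ℝ := ∑ i ∈ range (2 * k + 1), |p.coeff i| * (i.factorial : ℝ)

def B : ℕ → ℕ
  | 0 => 1
  | k + 1 => 2 * (2 * k + 2) ^ 2 * B k

lemma one_le_B : ∀ k, 1 ≤ B k
  | 0 => le_refl _
  | k + 1 => le_trans (one_le_B k) (Nat.le_mul_of_pos_left _ (by positivity))

lemma B_mono : Monotone B := by
  apply monotone_nat_of_le_succ
  intro k
  exact Nat.le_mul_of_pos_left _ (by positivity)

lemma NN_PP_le : ∀ k, NN k (PP k) ≤ (B k : ℝ) := by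
  intro k
  induction k with
  | zero =>
    simp [NN, B, PP]
  | succ k ih =>
    set p := PP k with hp
    have hdeg := natDegree_PP k
    have key : NN (k + 1) (PP (k + 1)) ≤ 2 * ((2 * k + 2) ^ 2 : ℝ) * NN k p := by
      have hPP : PP (k + 1) = (p - derivative p) * X ^ 2 := by rw [PP]; ring
      set q := p - derivative p with hq
      have hcoeff : ∀ i, (PP (k + 1)).coeff i =
          if 2 ≤ i then q.coeff (i - 2) else 0 := by
        intro i; rw [hPP, Polynomial.coeff_mul_X_pow']
      have h01 : (PP (k+1)).coeff 0 = 0 ∧ (PP (k+1)).coeff 1 = 0 := by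
        constructor <;> { rw [hcoeff]; norm_num }
      have hsum : NN (k + 1) (PP (k + 1))
          = ∑ i ∈ range (2 * k + 1), |q.coeff i| * ((i + 2).factorial : ℝ) := by
        unfold NN
        have : 2 * (k + 1) + 1 = (2 * k + 1) + 1 + 1 := by ring
        rw [this, Finset.sum_range_succ' _ ((2 * k + 1) + 1), Finset.sum_range_succ' _ (2 * k + 1)]
        rw [h01.1, h01.2]
        simp only [abs_zero, zero_mul, add_zero]
        refine Finset.sum_congr rfl fun i _ => ?_
        rw [hcoeff]
        simp only [show 2 ≤ i + 1 + 1 by omega, if_true]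
        congr 2 <;> omega
      rw [hsum]
      have hterm : ∀ i ∈ range (2 * k + 1),
          |q.coeff i| * ((i + 2).factorial : ℝ)
            ≤ ((2 * k + 2) ^ 2 : ℝ) * (|p.coeff i| * (i.factorial : ℝ))
              + ((2 * k + 2) ^ 2 : ℝ) * (|p.coeff (i + 1)| * ((i+1).factorial : ℝ)) := by
        intro i hi
        have hi' : i ≤ 2 * k := by simpa [Nat.lt_succ_iff] using hi
        have habs : |q.coeff i| ≤ |p.coeff i| + ((i : ℝ) + 1) * |p.coeff (i + 1)| := by
          rw [hq, Polynomial.coeff_sub, Polynomial.coeff_derivative]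
          have h := abs_sub (p.coeff i) (p.coeff (i + 1) * ((i : ℝ) + 1))
          rw [abs_mul, abs_of_nonneg (by positivity : (0:ℝ) ≤ (i:ℝ) + 1)] at h
          calc |p.coeff i - p.coeff (i + 1) * ((i : ℝ) + 1)|
              ≤ |p.coeff i| + |p.coeff (i + 1)| * ((i : ℝ) + 1) := h
            _ = |p.coeff i| + ((i : ℝ) + 1) * |p.coeff (i + 1)| := by ring
        have hf2 : ((i + 2).factorial : ℝ) = ((i+2) : ℝ) * ((i+1) : ℝ) * (i.factorial : ℝ) := by
          rw [show i + 2 = (i+1) + 1 by ring, Nat.factorial_succ, Nat.factorial_succ]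
          push_cast; ring
        have h2 : ((i:ℝ)+2) * ((i:ℝ)+1) ≤ ((2 * k + 2)^2 : ℝ) := by
          have hia : ((i:ℝ)+2) ≤ (2*(k:ℝ)+2) := by
            have : (i:ℝ) ≤ 2*(k:ℝ) := by exact_mod_cast hi'
            linarith
          have hib : ((i:ℝ)+1) ≤ (2*(k:ℝ)+2) := by linarith
          have hnn : (0:ℝ) ≤ (i:ℝ)+1 := by positivity
          calc ((i:ℝ)+2) * ((i:ℝ)+1) ≤ (2*(k:ℝ)+2) * (2*(k:ℝ)+2) :=
                mul_le_mul hia hib hnn (by linarith)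
            _ = ((2 * k + 2)^2 : ℝ) := by push_cast; ring
        have hfsucc : ((i+1).factorial : ℝ) = ((i:ℝ)+1) * (i.factorial : ℝ) := by
          rw [Nat.factorial_succ]; push_cast; ring
        calc |q.coeff i| * ((i + 2).factorial : ℝ)
            ≤ (|p.coeff i| + ((i : ℝ) + 1) * |p.coeff (i + 1)|) * ((i + 2).factorial : ℝ) := by
              have : (0:ℝ) ≤ ((i + 2).factorial : ℝ) := by positivity
              exact mul_le_mul_of_nonneg_right habs this
          _ = (((i:ℝ)+2) * ((i:ℝ)+1)) * (|p.coeff i| * (i.factorial : ℝ))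
              + (((i:ℝ)+2) * ((i:ℝ)+1)) * (|p.coeff (i+1)| * ((i+1).factorial : ℝ)) := by
              rw [hf2, hfsucc]; ring
          _ ≤ ((2 * k + 2) ^ 2 : ℝ) * (|p.coeff i| * (i.factorial : ℝ))
              + ((2 * k + 2) ^ 2 : ℝ) * (|p.coeff (i + 1)| * ((i+1).factorial : ℝ)) := by
              refine add_le_add (mul_le_mul_of_nonneg_right h2 (by positivity))
                (mul_le_mul_of_nonneg_right h2 (by positivity))
      calc ∑ i ∈ range (2 * k + 1), |q.coeff i| * ((i + 2).factorial : ℝ)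
          ≤ ∑ i ∈ range (2 * k + 1),
              (((2 * k + 2) ^ 2 : ℝ) * (|p.coeff i| * (i.factorial : ℝ))
              + ((2 * k + 2) ^ 2 : ℝ) * (|p.coeff (i + 1)| * ((i+1).factorial : ℝ))) :=
            Finset.sum_le_sum hterm
        _ = ((2 * k + 2) ^ 2 : ℝ) * NN k p
            + ((2 * k + 2) ^ 2 : ℝ) * ∑ i ∈ range (2 * k + 1), |p.coeff (i+1)| * ((i+1).factorial : ℝ) := by
            rw [Finset.sum_add_distrib, ← Finset.mul_sum, ← Finset.mul_sum]
            rfl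
        _ ≤ ((2 * k + 2) ^ 2 : ℝ) * NN k p + ((2 * k + 2) ^ 2 : ℝ) * NN k p := by
            refine add_le_add (le_refl _) (mul_le_mul_of_nonneg_left ?_ (by positivity))
            · -- shift sum ≤ NN k p
              have hzero : p.coeff (2 * k + 1) = 0 :=
                Polynomial.coeff_eq_zero_of_natDegree_lt (by rw [hp]; exact Nat.lt_succ_of_le hdeg)
              have : ∑ i ∈ range (2 * k + 1 + 1), |p.coeff i| * (i.factorial : ℝ)
                  = (∑ i ∈ range (2 * k + 1), |p.coeff (i+1)| * ((i+1).factorial : ℝ))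
                    + |p.coeff 0| * ((Nat.factorial 0 : ℕ) : ℝ) := by
                rw [Finset.sum_range_succ' _ (2 * k + 1)]
              have h2 : ∑ i ∈ range (2 * k + 1 + 1), |p.coeff i| * (i.factorial : ℝ)
                  = NN k p := by
                rw [Finset.sum_range_succ, hzero]
                simp only [abs_zero, zero_mul, add_zero]
                rfl
              rw [h2] at this
              have h0 : (0:ℝ) ≤ |p.coeff 0| * ((Nat.factorial 0 : ℕ) : ℝ) := by positivity
              linarith
        _ = 2 * ((2 * k + 2) ^ 2 : ℝ) * NN k p := by ring
    calc NN (k + 1) (PP (k + 1)) ≤ 2 * ((2 * k + 2) ^ 2 : ℝ) * NN k p := key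
      _ ≤ 2 * ((2 * k + 2) ^ 2 : ℝ) * (B k : ℝ) :=
          mul_le_mul_of_nonneg_left ih (by positivity)
      _ = ((B (k+1) : ℕ) : ℝ) := by rw [show B (k+1) = 2 * (2 * k + 2) ^ 2 * B k from rfl]; push_cast; ring

lemma NN_nonneg (k : ℕ) (p : ℝ[X]) : 0 ≤ NN k p := by
  apply Finset.sum_nonneg; intro i _; positivity

lemma eval_mul_exp_le {p : ℝ[X]} {k : ℕ} (hdeg : p.natDegree ≤ 2 * k) {y : ℝ} (hy : 0 ≤ y) :
    |p.eval y * Real.exp (-y)| ≤ NN k p := by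
  rw [Polynomial.eval_eq_sum_range' (Nat.lt_succ_of_le hdeg), Finset.sum_mul]
  refine (Finset.abs_sum_le_sum_abs _ _).trans (Finset.sum_le_sum fun i _ => ?_)
  have hpow : y ^ i * Real.exp (-y) ≤ (i.factorial : ℝ) := by
    rw [Real.exp_neg]
    rw [mul_inv_le_iff₀ (Real.exp_pos y)]
    have h1 : y ^ i / (i.factorial : ℝ) ≤ Real.exp y := by
      refine le_trans ?_ (Real.sum_le_exp_of_nonneg hy (i + 1))
      exact Finset.single_le_sum (f := fun j => y ^ j / (j.factorial : ℝ))
        (fun j _ => by positivity) (Finset.self_mem_range_succ i)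
    calc y ^ i = (y ^ i / (i.factorial : ℝ)) * (i.factorial : ℝ) := by
          field_simp
      _ ≤ Real.exp y * (i.factorial : ℝ) := by
          gcongr
      _ = (i.factorial : ℝ) * Real.exp y := by ring
  calc |p.coeff i * y ^ i * Real.exp (-y)| = |p.coeff i| * (y ^ i * Real.exp (-y)) := by
        rw [abs_mul, abs_mul, abs_of_nonneg (pow_nonneg hy i),
          abs_of_nonneg (Real.exp_pos _).le, mul_assoc]
    _ ≤ |p.coeff i| * (i.factorial : ℝ) :=
        mul_le_mul_of_nonneg_left hpow (abs_nonneg _)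

lemma abs_iteratedDeriv_expNegInvGlue_le (k : ℕ) (x : ℝ) :
    |iteratedDeriv k expNegInvGlue x| ≤ (B k : ℝ) := by
  rw [iteratedDeriv_expNegInvGlue k]
  show |(PP k).eval x⁻¹ * expNegInvGlue x| ≤ (B k : ℝ)
  rcases le_or_gt x 0 with hx | hx
  · simp only [expNegInvGlue.zero_of_nonpos hx, mul_zero, abs_zero]
    exact_mod_cast Nat.zero_le _
  · have hfx : expNegInvGlue x = Real.exp (-x⁻¹) := by
      simp [expNegInvGlue, hx.not_ge]
    rw [hfx]
    exact (eval_mul_exp_le (natDegree_PP k) (by positivity)).trans (NN_PP_le k)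

/-! ### The bump function -/

def phi : ℝ → ℝ := fun t => expNegInvGlue t * expNegInvGlue (1 - t)

lemma phi_contDiff : ContDiff ℝ (⊤ : ℕ∞) phi :=
  expNegInvGlue.contDiff.mul (expNegInvGlue.contDiff.comp (contDiff_const.sub contDiff_id))

lemma phi_cont : Continuous phi := phi_contDiff.continuous

lemma phi_nonneg (t : ℝ) : 0 ≤ phi t :=
  mul_nonneg (expNegInvGlue.nonneg _) (expNegInvGlue.nonneg _)

lemma abs_iteratedDeriv_phi_le (m : ℕ) (t : ℝ) :
    |iteratedDeriv m phi t| ≤ ((2 ^ m * (B m) ^ 2 : ℕ) : ℝ) := by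
  have hg : ∀ (i : ℕ) (s : ℝ),
      |iteratedDeriv i (fun u => expNegInvGlue (1 - u)) s| ≤ (B i : ℝ) := by
    intro i s
    have h1 : (fun u : ℝ => expNegInvGlue (1 - u)) =
        fun u : ℝ => expNegInvGlue (1 + -u) := by
      funext u; rw [sub_eq_add_neg]
    rw [h1]
    have h2 := iteratedDeriv_comp_neg i (fun z : ℝ => expNegInvGlue (1 + z)) s
    simp only [iteratedDeriv_comp_const_add] at h2
    rw [h2, smul_eq_mul, abs_mul, abs_pow, abs_neg, abs_one, one_pow, one_mul]
    exact abs_iteratedDeriv_expNegInvGlue_le i _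
  have hle := norm_iteratedFDeriv_mul_le (𝕜 := ℝ)
    (f := expNegInvGlue) (g := fun u => expNegInvGlue (1 - u)) (N := (⊤ : ℕ∞))
    expNegInvGlue.contDiff
    (expNegInvGlue.contDiff.comp (contDiff_const.sub contDiff_id)) t
    (n := m) (by exact_mod_cast le_top)
  beta_reduce at hle
  calc |iteratedDeriv m phi t| = ‖iteratedFDeriv ℝ m phi t‖ := by
        rw [norm_iteratedFDeriv_eq_norm_iteratedDeriv, Real.norm_eq_abs]
    _ ≤ ∑ i ∈ range (m + 1), (m.choose i : ℝ)
        * ‖iteratedFDeriv ℝ i expNegInvGlue t‖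
        * ‖iteratedFDeriv ℝ (m - i) (fun u => expNegInvGlue (1 - u)) t‖ := hle
    _ ≤ ∑ i ∈ range (m + 1), (m.choose i : ℝ) * ((B m : ℝ) * (B m : ℝ)) := by
        refine Finset.sum_le_sum fun i hi => ?_
        have hi' : i ≤ m := by simpa [Nat.lt_succ_iff] using hi
        rw [mul_assoc]
        refine mul_le_mul_of_nonneg_left ?_ (by positivity)
        have ha : ‖iteratedFDeriv ℝ i expNegInvGlue t‖ ≤ (B m : ℝ) := by
          rw [norm_iteratedFDeriv_eq_norm_iteratedDeriv, Real.norm_eq_abs]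
          exact (abs_iteratedDeriv_expNegInvGlue_le i t).trans (by exact_mod_cast B_mono hi')
        have hb : ‖iteratedFDeriv ℝ (m - i) (fun u => expNegInvGlue (1 - u)) t‖ ≤ (B m : ℝ) := by
          rw [norm_iteratedFDeriv_eq_norm_iteratedDeriv, Real.norm_eq_abs]
          exact (hg (m - i) t).trans (by exact_mod_cast B_mono (Nat.sub_le m i))
        exact mul_le_mul ha hb (norm_nonneg _) (by positivity)
    _ = ((2 ^ m * (B m) ^ 2 : ℕ) : ℝ) := by
        rw [← Finset.sum_mul]
        rw [show ∑ i ∈ range (m + 1), (m.choose i : ℝ) = ((2:ℝ) ^ m) by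
          exact_mod_cast congrArg (Nat.cast : ℕ → ℝ) (Nat.sum_range_choose m)]
        push_cast; ring

lemma key_nat : ∀ n : ℕ, 1 ≤ n → ∀ m : ℕ, m + 1 ≤ n →
    2 ^ m * (B m) ^ 2 ≤ n ^ (16 * n) := by
  intro n hn m hm
  have hBm : B m ≤ (2 * m + 2) ^ (3 * m) := by
    clear hm
    induction m with
    | zero => simp [B]
    | succ m ih =>
      calc B (m + 1) = 2 * (2 * m + 2) ^ 2 * B m := rfl
        _ ≤ 2 * (2 * m + 2) ^ 2 * (2 * m + 2) ^ (3 * m) := by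
            exact Nat.mul_le_mul_left _ ih

        _ = 2 * (2 * m + 2) ^ (3 * m + 2) := by rw [mul_assoc, ← pow_add]; ring_nf
        _ ≤ (2 * (m+1) + 2) * (2 * (m+1) + 2) ^ (3 * m + 2) := by
            refine Nat.mul_le_mul (by omega) (Nat.pow_le_pow_left (by omega) _)
        _ = (2 * (m+1) + 2) ^ (3 * m + 3) := by rw [← pow_succ']
        _ = (2 * (m+1) + 2) ^ (3 * (m+1)) := by ring_nf
  rcases Nat.lt_or_ge n 2 with hn2 | hn2
  · have : n = 1 := by omega
    subst this
    have : m = 0 := by omega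
    subst this
    simp [B]
  · -- n ≥ 2
    have hmn : m ≤ n := by omega
    have h1 : B m ≤ (2 * n) ^ (3 * n) := by
      calc B m ≤ (2 * m + 2) ^ (3 * m) := hBm
        _ ≤ (2 * n) ^ (3 * m) := Nat.pow_le_pow_left (by omega) _
        _ ≤ (2 * n) ^ (3 * n) := Nat.pow_le_pow_right (by omega) (by omega)
    have h2n : 2 * n ≤ n ^ 2 := by nlinarith
    calc 2 ^ m * (B m) ^ 2 ≤ 2 ^ n * ((2 * n) ^ (3 * n)) ^ 2 := by
          exact Nat.mul_le_mul (Nat.pow_le_pow_right (by omega) hmn)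
            (Nat.pow_le_pow_left h1 2)
      _ = 2 ^ n * (2 * n) ^ (6 * n) := by rw [← pow_mul]; ring_nf
      _ ≤ n ^ n * (n ^ 2) ^ (6 * n) := by
          exact Nat.mul_le_mul (Nat.pow_le_pow_left hn2 _) (Nat.pow_le_pow_left h2n _)
      _ = n ^ (13 * n) := by rw [← pow_mul, ← pow_add]; ring_nf
      _ ≤ n ^ (16 * n) := Nat.pow_le_pow_right (by omega) (by omega)

def Z : ℝ := ∫ t in (0:ℝ)..1, phi t

lemma Z_pos : 0 < Z := by
  refine intervalIntegral.intervalIntegral_pos_of_pos_on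
    (phi_cont.intervalIntegrable 0 1) (fun x hx => ?_) one_pos
  exact mul_pos (expNegInvGlue.pos_of_pos hx.1)
    (expNegInvGlue.pos_of_pos (by linarith [hx.2] : (0:ℝ) < 1 - x))

def alpha : ℝ → ℝ := fun x => (∫ t in (0:ℝ)..x, phi t) / Z

lemma hasDerivAt_alpha (x : ℝ) : HasDerivAt alpha (phi x / Z) x :=
  ((phi_cont.integral_hasStrictDerivAt 0 x).hasDerivAt).div_const Z

lemma deriv_alpha : deriv alpha = fun x => Z⁻¹ * phi x := by
  funext x
  rw [(hasDerivAt_alpha x).deriv, div_eq_inv_mul]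

lemma alpha_contDiff : ContDiff ℝ (⊤ : ℕ∞) alpha := by
  rw [show ((⊤:ℕ∞) : WithTop ℕ∞) = (⊤ : ℕ∞) from rfl, contDiff_infty_iff_deriv]
  refine ⟨fun x => (hasDerivAt_alpha x).differentiableAt, ?_⟩
  rw [deriv_alpha]
  exact contDiff_const.mul phi_contDiff

lemma integral_phi_zero_of_Icc {a b : ℝ} (hab : a ≤ b) (h : ∀ s ∈ Icc a b, phi s = 0) :
    (∫ t in a..b, phi t) = 0 := by
  rw [intervalIntegral.integral_congr (g := fun _ => (0:ℝ))
    (by rwa [Set.uIcc_of_le hab])]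
  simp

lemma alpha_nonpos {t : ℝ} (ht : t ≤ 0) : alpha t = 0 := by
  unfold alpha
  rw [intervalIntegral.integral_symm]
  rw [integral_phi_zero_of_Icc ht (fun s hs => by
    unfold phi
    rw [expNegInvGlue.zero_of_nonpos hs.2, zero_mul])]
  simp

lemma alpha_one_le {t : ℝ} (ht : 1 ≤ t) : alpha t = 1 := by
  unfold alpha
  have hsplit : (∫ u in (0:ℝ)..1, phi u) + (∫ u in (1:ℝ)..t, phi u) = ∫ u in (0:ℝ)..t, phi u :=
    intervalIntegral.integral_add_adjacent_intervals
      (phi_cont.intervalIntegrable 0 1) (phi_cont.intervalIntegrable 1 t)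
  have h2 : (∫ u in (1:ℝ)..t, phi u) = 0 :=
    integral_phi_zero_of_Icc ht (fun s hs => by
      unfold phi
      rw [expNegInvGlue.zero_of_nonpos (by linarith [hs.1] : 1 - s ≤ 0), mul_zero])
  rw [← hsplit, h2, add_zero]
  exact div_self Z_pos.ne'

lemma alpha_mono : StrictMonoOn alpha (Icc (0:ℝ) 1) := by
  refine strictMonoOn_of_deriv_pos (convex_Icc 0 1)
    (alpha_contDiff.continuous.continuousOn) (fun x hx => ?_)
  rw [interior_Icc] at hx
  rw [deriv_alpha]
  exact mul_pos (inv_pos.mpr Z_pos)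
    (mul_pos (expNegInvGlue.pos_of_pos hx.1)
      (expNegInvGlue.pos_of_pos (by linarith [hx.2] : (0:ℝ) < 1 - x)))

lemma alpha_mem_Icc (t : ℝ) : alpha t ∈ Icc (0:ℝ) 1 := by
  rcases le_or_gt t 0 with ht | ht
  · rw [alpha_nonpos ht]; exact ⟨le_refl _, zero_le_one⟩
  rcases le_or_gt 1 t with ht1 | ht1
  · rw [alpha_one_le ht1]; exact ⟨zero_le_one, le_refl _⟩
  constructor
  · unfold alpha
    exact div_nonneg
      (intervalIntegral.integral_nonneg ht.le (fun u _ => phi_nonneg u)) Z_pos.le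
  · unfold alpha
    rw [div_le_one Z_pos]
    have hsplit : (∫ u in (0:ℝ)..t, phi u) + (∫ u in t..1, phi u) = Z :=
      intervalIntegral.integral_add_adjacent_intervals
        (phi_cont.intervalIntegrable 0 t) (phi_cont.intervalIntegrable t 1)
    have h2 : 0 ≤ ∫ u in t..1, phi u :=
      intervalIntegral.integral_nonneg ht1.le (fun u _ => phi_nonneg u)
    linarith

lemma iteratedDeriv_alpha_succ (m : ℕ) (t : ℝ) :
    iteratedDeriv (m + 1) alpha t = Z⁻¹ * iteratedDeriv m phi t := by
  rw [iteratedDeriv_succ', deriv_alpha]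
  rw [← iteratedDerivWithin_univ, ← iteratedDerivWithin_univ]
  exact iteratedDerivWithin_const_mul (Set.mem_univ t) uniqueDiffOn_univ Z⁻¹
    (phi_contDiff.contDiffWithinAt.of_le (by exact_mod_cast le_top))

end BumpAux
end BumpAux

open BumpAux in
theorem exists_bump_function_with_derivative_bounds :
    ∃ α : ℝ → ℝ, ∃ c d : ℝ, 0 < c ∧ 0 < d ∧
      ContDiff ℝ (⊤ : ℕ∞) α ∧
      (∀ t : ℝ, t ≤ 0 → α t = 0) ∧
      StrictMonoOn α (Icc 0 1) ∧
      (∀ t : ℝ, 1 ≤ t → α t = 1) ∧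
      ∀ n : ℕ, 1 ≤ n → ∀ k : ℕ, k ≤ n → ∀ t : ℝ,
        |iteratedDeriv k α t| ≤ c * (n : ℝ) ^ (d * n) := by
  refine ⟨alpha, Z⁻¹ + 1, 16, by linarith [inv_pos.mpr Z_pos], by norm_num, alpha_contDiff,
    fun t ht => alpha_nonpos ht, alpha_mono, fun t ht => alpha_one_le ht, ?_⟩
  intro n hn k hk t
  have hrpow : ((n:ℝ)) ^ ((16:ℝ) * n) = ((n ^ (16 * n) : ℕ) : ℝ) := by
    rw [show ((16:ℝ) * n) = ((16 * n : ℕ) : ℝ) by push_cast; ring,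
      Real.rpow_natCast, Nat.cast_pow]
  rw [hrpow]
  have hone : (1:ℝ) ≤ ((n ^ (16 * n) : ℕ) : ℝ) := by
    exact_mod_cast Nat.one_le_pow _ _ (by omega)
  have hZinv : (0:ℝ) < Z⁻¹ := inv_pos.mpr Z_pos
  rcases Nat.eq_zero_or_pos k with rfl | hkpos
  · rw [iteratedDeriv_zero]
    have h := alpha_mem_Icc t
    have : |alpha t| ≤ 1 := abs_le.mpr ⟨by linarith [h.1], h.2⟩
    calc |alpha t| ≤ 1 := this
      _ ≤ (Z⁻¹ + 1) * 1 := by nlinarith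
      _ ≤ (Z⁻¹ + 1) * ((n ^ (16 * n) : ℕ) : ℝ) := by
          exact mul_le_mul_of_nonneg_left hone (by positivity)
  · obtain ⟨m, rfl⟩ : ∃ m, k = m + 1 := ⟨k - 1, by omega⟩
    rw [iteratedDeriv_alpha_succ]
    have hb := abs_iteratedDeriv_phi_le m t
    have hkey : ((2 ^ m * (B m) ^ 2 : ℕ) : ℝ) ≤ ((n ^ (16 * n) : ℕ) : ℝ) := by
      exact_mod_cast key_nat n hn m hk
    calc |Z⁻¹ * iteratedDeriv m phi t| = Z⁻¹ * |iteratedDeriv m phi t| := by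
          rw [abs_mul, abs_of_pos hZinv]
      _ ≤ Z⁻¹ * ((n ^ (16 * n) : ℕ) : ℝ) :=
          mul_le_mul_of_nonneg_left (hb.trans hkey) hZinv.le
      _ ≤ (Z⁻¹ + 1) * ((n ^ (16 * n) : ℕ) : ℝ) := by
          refine mul_le_mul_of_nonneg_right (by linarith) (by positivity)
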